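/- Let π* be a permutation of [n], let S ⊆ [n] with |S| = j, and let a be a position with a + j − 1 ≤ n. For permutations τ, τ′ of [n] that both place the elements of S in positions a, a+1, …, a+j−1 and that agree on the relative ordering of all elements of [n] \ S, one has d_KT(π*, τ) − d_KT(π*, τ′) = d_KT(π*|_S, τ|_S) − d_KT(π*|_S, τ′|_S). Consequently, for any φ > 0, the conditional distribution of a Mallows model M(φ, π*), conditioned on the event that the elements of S occupy positions a, …, a+j−1 and the relative ordering of [n] \ S equals a fixed ordering, induces on the relative ordering of S exactly the Mallows model M(φ, π*|_S). -/

import Mathlib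

open Finset

/-- Number of inversions of a permutation of `Fin n`. -/
def numInv {n : ℕ} (τ : Equiv.Perm (Fin n)) : ℕ :=
  (Finset.univ.filter fun p : Fin n × Fin n => p.1 < p.2 ∧ τ p.2 < τ p.1).card

/-- Kendall-Tau distance between two permutations of `Fin n`. -/
def dKT {n : ℕ} (π π' : Equiv.Perm (Fin n)) : ℕ :=
  (Finset.univ.filter fun p : Fin n × Fin n =>
    p.1 < p.2 ∧ ¬((π p.1 < π p.2) ↔ (π' p.1 < π' p.2))).card

/-- The Mallows model probability of `σ`, with scaling parameter `φ` and center `c`. -/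
noncomputable def mallows {n : ℕ} (φ : ℝ) (c : Equiv.Perm (Fin n)) (σ : Equiv.Perm (Fin n)) : ℝ :=
  φ ^ dKT c σ / ∑ τ : Equiv.Perm (Fin n), φ ^ dKT c τ

/-- Total variation distance. -/
noncomputable def dTV {n : ℕ} (P Q : Equiv.Perm (Fin n) → ℝ) : ℝ :=
  (∑ σ : Equiv.Perm (Fin n), |P σ - Q σ|) / 2

/-- The restriction `π|_S` of a permutation of `Fin n` to a subset `S` of size `j`,
as a permutation of `Fin j`: it sends the index of an element of `S` (in the increasing
enumeration of `S`) to the rank of its position (under `π`) among the positions occupied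
by the elements of `S`.  This records exactly the relative order in which `π` places the
elements of `S`. -/
noncomputable def restrictPerm {n : ℕ} (S : Finset (Fin n)) {j : ℕ} (h : S.card = j)
    (π : Equiv.Perm (Fin n)) : Equiv.Perm (Fin j) :=
  ((S.orderIsoOfFin h).toEquiv.trans
    ((π.subtypeEquiv (fun x => ⟨fun hx => Finset.mem_image_of_mem π hx,
        fun hx => by
          obtain ⟨y, hy, hyx⟩ := Finset.mem_image.mp hx
          exact (π.injective hyx) ▸ hy⟩)).trans
      ((S.image π).orderIsoOfFin
        (by rw [Finset.card_image_of_injective S π.injective]; exact h)).toEquiv.symm))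

/-- `τ` places the elements of `S` (and only those) in the consecutive positions
`a, a+1, …, a + |S| - 1` (positions numbered from `0`). -/
def placesAt {n : ℕ} (S : Finset (Fin n)) (a : ℕ) (τ : Equiv.Perm (Fin n)) : Prop :=
  S.image (fun x => ((τ x : ℕ))) = Finset.Ico a (a + S.card)

namespace LM
variable {n j a : ℕ}

lemma oiof_coe_congr {A B : Finset (Fin n)} (hAB : A = B) (hA : A.card = j) (hB : B.card = j)
    (i : Fin j) : ((A.orderIsoOfFin hA i : Fin n)) = (B.orderIsoOfFin hB i : Fin n) := by
  subst hAB; rfl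

def T (n a j : ℕ) (ha : a + j ≤ n) : Finset (Fin n) :=
  (Finset.Ico a (a+j)).attachFin (fun m hm => lt_of_lt_of_le (Finset.mem_Ico.mp hm).2 ha)

lemma mem_T (ha : a + j ≤ n) {x : Fin n} : x ∈ T n a j ha ↔ a ≤ (x:ℕ) ∧ (x:ℕ) < a + j := by
  simp [T, Finset.mem_attachFin]

lemma card_T (ha : a + j ≤ n) : (T n a j ha).card = j := by
  simp [T, Finset.card_attachFin]

lemma card_lt_val (τ : Equiv.Perm (Fin n)) (y : Fin n) :
    (univ.filter fun z => τ z < τ y).card = (τ y : ℕ) := by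
  have : (univ.filter fun z => τ z < τ y) = (Finset.Iio (τ y)).image τ.symm := by
    ext z
    simp only [mem_filter, mem_univ, true_and, mem_image, Finset.mem_Iio]
    constructor
    · intro hz; exact ⟨τ z, hz, by simp⟩
    · rintro ⟨w, hw, rfl⟩; simpa using hw
  rw [this, Finset.card_image_of_injective _ τ.symm.injective, Fin.card_Iio]

lemma split_card (S : Finset (Fin n)) (q : Fin n → Prop) [DecidablePred q] :
    (univ.filter fun z => q z).card
      = (S.filter q).card + (univ.filter fun z => z ∉ S ∧ q z).card := by
  classical
  have := Finset.card_filter_add_card_filter_not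
    (s := univ.filter fun z => q z) (p := fun z => z ∈ S)
  rw [← this]
  congr 1
  · congr 1; ext z; simp [and_comm]
  · congr 1; ext z; simp [and_comm]

variable (S : Finset (Fin n))

lemma restrict_apply (h : S.card = j) (π : Equiv.Perm (Fin n)) (i : Fin j) :
    (((S.image π).orderIsoOfFin
      (by rw [Finset.card_image_of_injective S π.injective]; exact h)
      ((restrictPerm S h π) i) : Fin n)) = π (S.orderIsoOfFin h i) := by
  simp [restrictPerm]

lemma restrict_lt_iff (h : S.card = j) (π : Equiv.Perm (Fin n)) (i i' : Fin j) :
    restrictPerm S h π i < restrictPerm S h π i' ↔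
      π (S.orderIsoOfFin h i) < π (S.orderIsoOfFin h i') := by
  have hp : (S.image π).card = j := by
    rw [Finset.card_image_of_injective S π.injective]; exact h
  rw [← (((S.image π)).orderIsoOfFin hp).lt_iff_lt]
  rw [← Subtype.coe_lt_coe, restrict_apply S h π i, restrict_apply S h π i']

lemma placesAt_iff (h : S.card = j) (ha : a + j ≤ n) (τ : Equiv.Perm (Fin n)) :
    placesAt S a τ ↔ S.image τ = T n a j ha := by
  rw [placesAt, h]
  constructor
  · intro hp
    ext x
    simp only [Finset.mem_image, mem_T]
    constructor
    · rintro ⟨y, hy, rfl⟩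
      have : (τ y : ℕ) ∈ Finset.Ico a (a+j) := by
        rw [← hp]; exact Finset.mem_image_of_mem _ hy
      simpa [Finset.mem_Ico] using this
    · rintro hx
      have : (x:ℕ) ∈ S.image (fun x => ((τ x : ℕ))) := by
        rw [hp]; simp [Finset.mem_Ico, hx.1, hx.2]
      obtain ⟨y, hy, hyx⟩ := Finset.mem_image.mp this
      exact ⟨y, hy, Fin.ext hyx⟩
  · intro hp
    have : S.image (fun x => ((τ x : ℕ))) = (S.image τ).image (fun x : Fin n => (x:ℕ)) := by
      rw [Finset.image_image]; rfl
    rw [this, hp]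
    ext m
    simp only [Finset.mem_image, mem_T, Finset.mem_Ico]
    constructor
    · rintro ⟨y, hy, rfl⟩; exact hy
    · intro hm
      exact ⟨⟨m, lt_of_lt_of_le hm.2 ha⟩, hm, rfl⟩

lemma memS_bounds (h : S.card = j) (ha : a + j ≤ n) {τ : Equiv.Perm (Fin n)}
    (hτ : S.image τ = T n a j ha) {x : Fin n} (hx : x ∈ S) :
    a ≤ (τ x : ℕ) ∧ (τ x : ℕ) < a + j := by
  have : τ x ∈ T n a j ha := hτ ▸ Finset.mem_image_of_mem τ hx
  exact (mem_T ha).mp this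

lemma notmemS_bounds (h : S.card = j) (ha : a + j ≤ n) {τ : Equiv.Perm (Fin n)}
    (hτ : S.image τ = T n a j ha) {y : Fin n} (hy : y ∉ S) :
    (τ y : ℕ) < a ∨ a + j ≤ (τ y : ℕ) := by
  by_contra hc
  push_neg at hc
  have : τ y ∈ T n a j ha := (mem_T ha).mpr ⟨hc.1, hc.2⟩
  rw [← hτ] at this
  obtain ⟨z, hz, hzy⟩ := Finset.mem_image.mp this
  exact hy (τ.injective hzy ▸ hz)

open scoped Classical in
lemma rank_decomp (h : S.card = j) (ha : a + j ≤ n) {τ : Equiv.Perm (Fin n)}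
    (hτ : S.image τ = T n a j ha) {y : Fin n} (hy : y ∉ S) :
    (τ y : ℕ) = (if a + j ≤ (τ y : ℕ) then j else 0)
      + (univ.filter fun z => z ∉ S ∧ τ z < τ y).card := by
  have hsplit : (τ y : ℕ) = (S.filter fun z => τ z < τ y).card
      + (univ.filter fun z => z ∉ S ∧ τ z < τ y).card := by
    conv_lhs => rw [← card_lt_val τ y]
    exact split_card S _
  rcases notmemS_bounds S h ha hτ hy with hlt | hge
  · have h0 : (S.filter fun z => τ z < τ y).card = 0 := by
      rw [Finset.filter_false_of_mem, Finset.card_empty]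
      intro z hz
      have := (memS_bounds S h ha hτ hz).1
      rw [Fin.lt_def]; omega
    rw [if_neg (by omega)]
    omega
  · have h0 : (S.filter fun z => τ z < τ y).card = j := by
      rw [Finset.filter_true_of_mem, h]
      intro z hz
      have := (memS_bounds S h ha hτ hz).2
      rw [Fin.lt_def]; omega
    rw [if_pos hge]
    omega

open scoped Classical in
lemma offS_eq (h : S.card = j) (ha : a + j ≤ n) {τ τ' : Equiv.Perm (Fin n)}
    (hτ : S.image τ = T n a j ha) (hτ' : S.image τ' = T n a j ha)
    (hord : ∀ x ∉ S, ∀ y ∉ S, (τ x < τ y ↔ τ' x < τ' y)) :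
    ∀ y ∉ S, τ y = τ' y := by
  intro y hy
  have h1 := rank_decomp S h ha hτ hy
  have h2 := rank_decomp S h ha hτ' hy
  have hC : (univ.filter fun z => z ∉ S ∧ τ z < τ y).card
      = (univ.filter fun z => z ∉ S ∧ τ' z < τ' y).card := by
    congr 1
    ext z
    simp only [mem_filter, mem_univ, true_and, and_congr_right_iff]
    intro hz
    exact hord z hz y hy
  rw [hC] at h1
  have b1 := notmemS_bounds S h ha hτ hy
  have b2 := notmemS_bounds S h ha hτ' hy
  have : (τ y : ℕ) = (τ' y : ℕ) := by
    by_cases c1 : a + j ≤ (τ y : ℕ) <;> by_cases c2 : a + j ≤ (τ' y : ℕ) <;>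
      simp [c1, c2] at h1 h2 <;> omega
  exact Fin.ext this

lemma mixed1 (h : S.card = j) (ha : a + j ≤ n) {τ : Equiv.Perm (Fin n)}
    (hτ : S.image τ = T n a j ha) {x y : Fin n} (hx : x ∈ S) (hy : y ∉ S) :
    (τ x < τ y ↔ a + j ≤ (τ y : ℕ)) := by
  have h1 := memS_bounds S h ha hτ hx
  have h2 := notmemS_bounds S h ha hτ hy
  rw [Fin.lt_def]; omega

lemma mixed2 (h : S.card = j) (ha : a + j ≤ n) {τ : Equiv.Perm (Fin n)}
    (hτ : S.image τ = T n a j ha) {x y : Fin n} (hx : x ∉ S) (hy : y ∈ S) :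
    (τ x < τ y ↔ (τ x : ℕ) < a) := by
  have h1 := memS_bounds S h ha hτ hy
  have h2 := notmemS_bounds S h ha hτ hx
  rw [Fin.lt_def]; omega

lemma order_agree (h : S.card = j) (ha : a + j ≤ n) {τ τ' : Equiv.Perm (Fin n)}
    (hτ : S.image τ = T n a j ha) (hτ' : S.image τ' = T n a j ha)
    (hord : ∀ x ∉ S, ∀ y ∉ S, (τ x < τ y ↔ τ' x < τ' y)) :
    ∀ p1 p2 : Fin n, ¬(p1 ∈ S ∧ p2 ∈ S) → (τ p1 < τ p2 ↔ τ' p1 < τ' p2) := by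
  intro p1 p2 hp
  have hoff := offS_eq S h ha hτ hτ' hord
  by_cases h1 : p1 ∈ S <;> by_cases h2 : p2 ∈ S
  · exact absurd ⟨h1, h2⟩ hp
  · rw [mixed1 S h ha hτ h1 h2, mixed1 S h ha hτ' h1 h2, hoff p2 h2]
  · rw [mixed2 S h ha hτ h1 h2, mixed2 S h ha hτ' h1 h2, hoff p1 h1]
  · rw [hoff p1 h1, hoff p2 h2]

open scoped Classical in
lemma inner_card (h : S.card = j) (π τ : Equiv.Perm (Fin n)) :
    (univ.filter fun p : Fin n × Fin n =>
        (p.1 < p.2 ∧ ¬((π p.1 < π p.2) ↔ (τ p.1 < τ p.2))) ∧ p.1 ∈ S ∧ p.2 ∈ S).card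
      = dKT (restrictPerm S h π) (restrictPerm S h τ) := by
  rw [dKT]
  refine (Finset.card_bij (fun q _ => (((S.orderIsoOfFin h q.1 : Fin n)),
      ((S.orderIsoOfFin h q.2 : Fin n)))) ?_ ?_ ?_).symm
  · rintro ⟨q1, q2⟩ hq
    simp only [mem_filter, mem_univ, true_and] at hq ⊢
    refine ⟨⟨?_, ?_⟩, (S.orderIsoOfFin h q1).2, (S.orderIsoOfFin h q2).2⟩
    · exact_mod_cast (S.orderIsoOfFin h).lt_iff_lt.mpr hq.1
    · have h1 := restrict_lt_iff S h π q1 q2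
      have h2 := restrict_lt_iff S h τ q1 q2
      tauto
  · rintro ⟨q1, q2⟩ hq ⟨r1, r2⟩ hr hqr
    simp only [Prod.mk.injEq] at hqr
    have e1 : (S.orderIsoOfFin h q1) = (S.orderIsoOfFin h r1) := Subtype.ext hqr.1
    have e2 : (S.orderIsoOfFin h q2) = (S.orderIsoOfFin h r2) := Subtype.ext hqr.2
    exact Prod.ext ((S.orderIsoOfFin h).injective e1) ((S.orderIsoOfFin h).injective e2)
  · rintro ⟨p1, p2⟩ hp
    simp only [mem_filter, mem_univ, true_and] at hp
    obtain ⟨⟨hlt, hdis⟩, hp1, hp2⟩ := hp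
    refine ⟨((S.orderIsoOfFin h).symm ⟨p1, hp1⟩, (S.orderIsoOfFin h).symm ⟨p2, hp2⟩), ?_, ?_⟩
    · simp only [mem_filter, mem_univ, true_and]
      constructor
      · rw [← (S.orderIsoOfFin h).lt_iff_lt]
        simpa using hlt
      · rw [restrict_lt_iff S h π, restrict_lt_iff S h τ]
        simpa using hdis
    · simp

open scoped Classical in
lemma dKT_split (π τ : Equiv.Perm (Fin n)) :
    dKT π τ = (univ.filter fun p : Fin n × Fin n =>
        (p.1 < p.2 ∧ ¬((π p.1 < π p.2) ↔ (τ p.1 < τ p.2))) ∧ p.1 ∈ S ∧ p.2 ∈ S).card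
      + (univ.filter fun p : Fin n × Fin n =>
        (p.1 < p.2 ∧ ¬((π p.1 < π p.2) ↔ (τ p.1 < τ p.2))) ∧ ¬(p.1 ∈ S ∧ p.2 ∈ S)).card := by
  rw [dKT]
  conv_lhs => rw [← Finset.card_filter_add_card_filter_not
    (p := fun p : Fin n × Fin n => p.1 ∈ S ∧ p.2 ∈ S)]
  rw [Finset.filter_filter, Finset.filter_filter]

open scoped Classical in
lemma fact1 (h : S.card = j) (ha : a + j ≤ n) (πstar : Equiv.Perm (Fin n))
    {τ τ' : Equiv.Perm (Fin n)}
    (hτ : S.image τ = T n a j ha) (hτ' : S.image τ' = T n a j ha)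
    (hord : ∀ x ∉ S, ∀ y ∉ S, (τ x < τ y ↔ τ' x < τ' y)) :
    (dKT πstar τ : ℤ) - (dKT πstar τ' : ℤ) =
      (dKT (restrictPerm S h πstar) (restrictPerm S h τ) : ℤ) -
        (dKT (restrictPerm S h πstar) (restrictPerm S h τ') : ℤ) := by
  have hagree := order_agree S h ha hτ hτ' hord
  have hB : (univ.filter fun p : Fin n × Fin n =>
        (p.1 < p.2 ∧ ¬((πstar p.1 < πstar p.2) ↔ (τ p.1 < τ p.2))) ∧ ¬(p.1 ∈ S ∧ p.2 ∈ S)).card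
      = (univ.filter fun p : Fin n × Fin n =>
        (p.1 < p.2 ∧ ¬((πstar p.1 < πstar p.2) ↔ (τ' p.1 < τ' p.2))) ∧ ¬(p.1 ∈ S ∧ p.2 ∈ S)).card := by
    congr 1
    ext p
    simp only [mem_filter, mem_univ, true_and]
    constructor
    · rintro ⟨⟨h1, h2⟩, h3⟩
      exact ⟨⟨h1, fun hc => h2 (by rw [hagree p.1 p.2 h3]; exact hc)⟩, h3⟩
    · rintro ⟨⟨h1, h2⟩, h3⟩
      exact ⟨⟨h1, fun hc => h2 (by rw [← hagree p.1 p.2 h3]; exact hc)⟩, h3⟩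
  rw [dKT_split S πstar τ, dKT_split S πstar τ', inner_card S h πstar τ,
    inner_card S h πstar τ', hB]
  push_cast
  ring


lemma restrict_val (h : S.card = j) (ha : a + j ≤ n) {τ : Equiv.Perm (Fin n)}
    (hτ : S.image τ = T n a j ha) (i : Fin j) :
    τ (S.orderIsoOfFin h i)
      = ((T n a j ha).orderIsoOfFin (card_T ha) (restrictPerm S h τ i) : Fin n) := by
  have hp : (S.image τ).card = j := by
    rw [Finset.card_image_of_injective S τ.injective]; exact h
  rw [← restrict_apply S h τ i]
  exact oiof_coe_congr hτ hp (card_T ha) _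

lemma restrict_eq_of (h : S.card = j) (ha : a + j ≤ n) {τ : Equiv.Perm (Fin n)}
    (hτ : S.image τ = T n a j ha) (s : Equiv.Perm (Fin j))
    (hs : ∀ i : Fin j, τ (S.orderIsoOfFin h i)
      = ((T n a j ha).orderIsoOfFin (card_T ha) (s i) : Fin n)) :
    restrictPerm S h τ = s := by
  apply Equiv.ext; intro i
  have h1 := (restrict_val S h ha hτ i).symm.trans (hs i)
  exact ((T n a j ha).orderIsoOfFin (card_T ha)).injective (Subtype.ext h1)

lemma perm_eq (h : S.card = j) (ha : a + j ≤ n) {τ τ' : Equiv.Perm (Fin n)}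
    (hτ : S.image τ = T n a j ha) (hτ' : S.image τ' = T n a j ha)
    (hres : restrictPerm S h τ = restrictPerm S h τ')
    (hord : ∀ x ∉ S, ∀ y ∉ S, (τ x < τ y ↔ τ' x < τ' y)) : τ = τ' := by
  apply Equiv.ext; intro x
  by_cases hx : x ∈ S
  · have hei : ((S.orderIsoOfFin h) ((S.orderIsoOfFin h).symm ⟨x, hx⟩) : Fin n) = x := by simp
    rw [← hei, restrict_val S h ha hτ, restrict_val S h ha hτ', hres]
  · exact offS_eq S h ha hτ hτ' hord x hx


lemma card_compl_S (h : S.card = j) : (Sᶜ : Finset (Fin n)).card = n - j := by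
  rw [Finset.card_compl, h, Fintype.card_fin]

lemma card_image_compl (h : S.card = j) (ρ : Equiv.Perm (Fin n)) :
    ((Sᶜ : Finset (Fin n)).image ρ).card = n - j := by
  rw [Finset.card_image_of_injective _ ρ.injective, card_compl_S S h]

lemma card_compl_T (ha : a + j ≤ n) : ((T n a j ha)ᶜ : Finset (Fin n)).card = n - j := by
  rw [Finset.card_compl, card_T ha, Fintype.card_fin]

noncomputable def eC (h : S.card = j) (ha : a + j ≤ n) (ρ : Equiv.Perm (Fin n)) :
    {x : Fin n // ¬ x ∈ S} ≃ {x : Fin n // ¬ x ∈ T n a j ha} :=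
  ((Equiv.subtypeEquivRight (fun x => (Finset.mem_compl (s := S)).symm)).trans
    ((ρ.subtypeEquiv (fun x => ⟨fun hx => Finset.mem_image_of_mem ρ hx,
        fun hx => by
          obtain ⟨y, hy, hyx⟩ := Finset.mem_image.mp hx
          exact (ρ.injective hyx) ▸ hy⟩)).trans
      ((((Sᶜ : Finset (Fin n)).image ρ).orderIsoOfFin
          (card_image_compl S h ρ)).toEquiv.symm.trans
        ((((T n a j ha)ᶜ : Finset (Fin n)).orderIsoOfFin
            (card_compl_T ha)).toEquiv.trans
          (Equiv.subtypeEquivRight (fun x => Finset.mem_compl (s := T n a j ha)))))))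

noncomputable def tauOf (h : S.card = j) (ha : a + j ≤ n) (ρ : Equiv.Perm (Fin n))
    (s : Equiv.Perm (Fin j)) : Equiv.Perm (Fin n) := by
  classical
  exact (Equiv.sumCompl (· ∈ S)).symm.trans
    ((Equiv.sumCongr
        ((S.orderIsoOfFin h).toEquiv.symm.trans
          ((s : Fin j ≃ Fin j).trans ((T n a j ha).orderIsoOfFin (card_T ha)).toEquiv))
        (eC S h ha ρ)).trans
      (Equiv.sumCompl (· ∈ T n a j ha)))

lemma tauOf_mem (h : S.card = j) (ha : a + j ≤ n) (ρ : Equiv.Perm (Fin n))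
    (s : Equiv.Perm (Fin j)) {x : Fin n} (hx : x ∈ S) :
    tauOf S h ha ρ s x
      = ((T n a j ha).orderIsoOfFin (card_T ha) (s ((S.orderIsoOfFin h).symm ⟨x, hx⟩)) : Fin n) := by
  classical
  simp [tauOf, Equiv.sumCompl_symm_apply_of_pos hx]

lemma tauOf_not_mem (h : S.card = j) (ha : a + j ≤ n) (ρ : Equiv.Perm (Fin n))
    (s : Equiv.Perm (Fin j)) {x : Fin n} (hx : ¬ x ∈ S) :
    tauOf S h ha ρ s x = ((eC S h ha ρ ⟨x, hx⟩ : Fin n)) := by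
  classical
  simp [tauOf, Equiv.sumCompl_symm_apply_of_neg hx]

lemma eC_coe (h : S.card = j) (ha : a + j ≤ n) (ρ : Equiv.Perm (Fin n)) {y : Fin n}
    (hy : ¬ y ∈ S) :
    (eC S h ha ρ ⟨y, hy⟩ : Fin n)
      = ((((T n a j ha)ᶜ : Finset (Fin n)).orderIsoOfFin (card_compl_T ha)
          ((((Sᶜ : Finset (Fin n)).image ρ).orderIsoOfFin (card_image_compl S h ρ)).symm
            ⟨ρ y, Finset.mem_image_of_mem ρ (Finset.mem_compl.mpr hy)⟩) : Fin n)) := by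
  simp [eC]

lemma tauOf_image (h : S.card = j) (ha : a + j ≤ n) (ρ : Equiv.Perm (Fin n))
    (s : Equiv.Perm (Fin j)) : S.image (tauOf S h ha ρ s) = T n a j ha := by
  apply Finset.eq_of_subset_of_card_le
  · rintro x hx
    obtain ⟨y, hy, rfl⟩ := Finset.mem_image.mp hx
    rw [tauOf_mem S h ha ρ s hy]
    exact ((T n a j ha).orderIsoOfFin (card_T ha) _).2
  · rw [card_T ha, Finset.card_image_of_injective S (tauOf S h ha ρ s).injective, h]

lemma tauOf_restrict (h : S.card = j) (ha : a + j ≤ n) (ρ : Equiv.Perm (Fin n))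
    (s : Equiv.Perm (Fin j)) : restrictPerm S h (tauOf S h ha ρ s) = s := by
  apply restrict_eq_of S h ha (tauOf_image S h ha ρ s)
  intro i
  rw [tauOf_mem S h ha ρ s (S.orderIsoOfFin h i).2]
  congr 2
  exact congrArg s ((S.orderIsoOfFin h).symm_apply_eq.mpr (Subtype.ext rfl))

lemma tauOf_ord (h : S.card = j) (ha : a + j ≤ n) (ρ : Equiv.Perm (Fin n))
    (s : Equiv.Perm (Fin j)) :
    ∀ x ∉ S, ∀ y ∉ S, (tauOf S h ha ρ s x < tauOf S h ha ρ s y ↔ ρ x < ρ y) := by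
  intro x hx y hy
  rw [tauOf_not_mem S h ha ρ s hx, tauOf_not_mem S h ha ρ s hy,
    eC_coe S h ha ρ hx, eC_coe S h ha ρ hy, Subtype.coe_lt_coe,
    OrderIso.lt_iff_lt, OrderIso.lt_iff_lt, Subtype.mk_lt_mk]


end LM

open scoped Classical in
/-- **Fact 3.1 of Liu–Moitra.** Let `S ⊆ [n]` with `|S| = j` and let `a` be a position
with `a + j - 1 ≤ n`.  (1) For permutations `τ, τ'` that both place the elements of `S`
in positions `a, …, a+j-1` and agree on the relative ordering of `[n] \ S`,
`d_KT(π*, τ) - d_KT(π*, τ') = d_KT(π*|_S, τ|_S) - d_KT(π*|_S, τ'|_S)`.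
(2) Consequently, for `φ > 0`, the conditional distribution of `M(φ, π*)`, conditioned on
the elements of `S` occupying positions `a, …, a+j-1` and the relative ordering of
`[n] \ S` being that of a fixed permutation `ρ`, induces on the relative ordering of `S`
exactly the Mallows model `M(φ, π*|_S)`. -/
theorem conditional_restriction (n j a : ℕ) (S : Finset (Fin n)) (h : S.card = j)
    (ha : a + j ≤ n) (πstar : Equiv.Perm (Fin n)) :
    (∀ τ τ' : Equiv.Perm (Fin n), placesAt S a τ → placesAt S a τ' →
      (∀ x ∉ S, ∀ y ∉ S, (τ x < τ y ↔ τ' x < τ' y)) →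
      (dKT πstar τ : ℤ) - (dKT πstar τ' : ℤ) =
        (dKT (restrictPerm S h πstar) (restrictPerm S h τ) : ℤ) -
          (dKT (restrictPerm S h πstar) (restrictPerm S h τ') : ℤ)) ∧
    (∀ φ : ℝ, 0 < φ → ∀ ρ : Equiv.Perm (Fin n), ∀ s : Equiv.Perm (Fin j),
      (∑ τ : Equiv.Perm (Fin n),
        if placesAt S a τ ∧ (∀ x ∉ S, ∀ y ∉ S, (τ x < τ y ↔ ρ x < ρ y)) ∧
            restrictPerm S h τ = s
        then mallows φ πstar τ else 0)
      = (∑ τ : Equiv.Perm (Fin n),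
          if placesAt S a τ ∧ (∀ x ∉ S, ∀ y ∉ S, (τ x < τ y ↔ ρ x < ρ y))
          then mallows φ πstar τ else 0)
        * mallows φ (restrictPerm S h πstar) s) := by
  constructor
  · intro τ τ' hp hp' hord
    exact LM.fact1 S h ha πstar ((LM.placesAt_iff S h ha τ).mp hp)
      ((LM.placesAt_iff S h ha τ').mp hp') hord
  · intro φ hφ ρ s
    have hplaces : ∀ s' : Equiv.Perm (Fin j), placesAt S a (LM.tauOf S h ha ρ s') :=
      fun s' => (LM.placesAt_iff S h ha _).mpr (LM.tauOf_image S h ha ρ s')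
    have hres : ∀ s', restrictPerm S h (LM.tauOf S h ha ρ s') = s' := LM.tauOf_restrict S h ha ρ
    have hord' := LM.tauOf_ord S h ha ρ
    have huniq : ∀ τ : Equiv.Perm (Fin n), placesAt S a τ →
        (∀ x ∉ S, ∀ y ∉ S, (τ x < τ y ↔ ρ x < ρ y)) →
        τ = LM.tauOf S h ha ρ (restrictPerm S h τ) := by
      intro τ hpl hord
      apply LM.perm_eq S h ha ((LM.placesAt_iff S h ha τ).mp hpl)
        (LM.tauOf_image S h ha ρ _) (hres _).symm
      intro x hx y hy
      rw [hord x hx y hy, ← hord' _ x hx y hy]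
    have hL : (∑ τ : Equiv.Perm (Fin n),
        if placesAt S a τ ∧ (∀ x ∉ S, ∀ y ∉ S, (τ x < τ y ↔ ρ x < ρ y)) ∧
            restrictPerm S h τ = s
        then mallows φ πstar τ else 0) = mallows φ πstar (LM.tauOf S h ha ρ s) := by
      refine (Finset.sum_eq_single_of_mem (LM.tauOf S h ha ρ s) (Finset.mem_univ _) ?_).trans ?_
      · intro τ _ hne
        rw [if_neg]
        rintro ⟨h1, h2, h3⟩
        exact hne (by rw [huniq τ h1 h2, h3])
      · rw [if_pos ⟨hplaces s, fun x hx y hy => hord' s x hx y hy, hres s⟩]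
    have hR : (∑ τ : Equiv.Perm (Fin n),
        if placesAt S a τ ∧ (∀ x ∉ S, ∀ y ∉ S, (τ x < τ y ↔ ρ x < ρ y))
        then mallows φ πstar τ else 0)
        = ∑ s' : Equiv.Perm (Fin j), mallows φ πstar (LM.tauOf S h ha ρ s') := by
      rw [← Finset.sum_filter]
      refine (Finset.sum_bij (fun s' _ => LM.tauOf S h ha ρ s') ?_ ?_ ?_ ?_).symm
      · intro s' _
        simp only [Finset.mem_filter, Finset.mem_univ, true_and]
        exact ⟨hplaces s', fun x hx y hy => hord' s' x hx y hy⟩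
      · intro s1 _ s2 _ heq
        rw [← hres s1, ← hres s2]
        exact congrArg (restrictPerm S h) heq
      · intro τ hτ
        simp only [Finset.mem_filter, Finset.mem_univ, true_and] at hτ
        exact ⟨restrictPerm S h τ, Finset.mem_univ _, (huniq τ hτ.1 hτ.2).symm⟩
      · intro s' _; rfl
    rw [hL, hR]
    set r := restrictPerm S h πstar with hrdef
    have key : ∀ s1 s2 : Equiv.Perm (Fin j),
        φ ^ dKT πstar (LM.tauOf S h ha ρ s1) * φ ^ dKT r s2
          = φ ^ dKT πstar (LM.tauOf S h ha ρ s2) * φ ^ dKT r s1 := by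
      intro s1 s2
      have hfact := LM.fact1 S h ha πstar (LM.tauOf_image S h ha ρ s1)
        (LM.tauOf_image S h ha ρ s2)
        (fun x hx y hy => by rw [hord' s1 x hx y hy, ← hord' s2 x hx y hy])
      rw [hres s1, hres s2, ← hrdef] at hfact
      rw [← pow_add, ← pow_add]
      congr 1
      omega
    have hZn : (0:ℝ) < ∑ τ : Equiv.Perm (Fin n), φ ^ dKT πstar τ :=
      Finset.sum_pos (fun τ _ => pow_pos hφ _) Finset.univ_nonempty
    have hZj : (0:ℝ) < ∑ τ : Equiv.Perm (Fin j), φ ^ dKT r τ :=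
      Finset.sum_pos (fun τ _ => pow_pos hφ _) Finset.univ_nonempty
    have main : φ ^ dKT πstar (LM.tauOf S h ha ρ s) * (∑ τ : Equiv.Perm (Fin j), φ ^ dKT r τ)
        = (∑ s' : Equiv.Perm (Fin j), φ ^ dKT πstar (LM.tauOf S h ha ρ s')) * φ ^ dKT r s := by
      rw [Finset.mul_sum, Finset.sum_mul]
      exact Finset.sum_congr rfl (fun s' _ => key s s')
    simp only [mallows]
    rw [← Finset.sum_div, div_mul_div_comm, div_eq_div_iff hZn.ne' (by positivity)]
    linear_combination (∑ τ : Equiv.Perm (Fin n), φ ^ dKT πstar τ) * main
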